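/- Let α = (α_0, α_1, α_2, …) be an infinite sequence of real numbers and let U_α : ℝ[x] → ℝ[x] be the linear operator defined by U_α(p) = Σ_{i≥0} α_i·p^(i) (a finite sum for each polynomial p). Then the following are equivalent: (a) U_α preserves non-negativity, i.e., for every polynomial p with p(x) ≥ 0 for all real x, (U_α(p))(x) ≥ 0 for all real x; (b) for every non-negative polynomial p(x) = a_n x^n + … + a_1 x + a_0, one has a_0·α_0 + 1!·a_1·α_1 + … + n!·a_n·α_n ≥ 0; (c) for every l ≥ 0, the (l+1)×(l+1) Hankel matrix whose (i,j)-entry (0 ≤ i,j ≤ l) equals (i+j)!·α_{i+j} is positive semi-definite. -/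

import Mathlib

open Polynomial

/-- The infinite-order constant-coefficient operator `U_α(p) = ∑ αᵢ p⁽ⁱ⁾`
(a finite sum since high derivatives of a polynomial vanish). -/
noncomputable def Ualpha (α : ℕ → ℝ) (p : Polynomial ℝ) : Polynomial ℝ :=
  ∑ i ∈ Finset.range (p.natDegree + 1), α i • (Polynomial.derivative^[i] p)

section SOS

lemma isSumSq_mul_self' {R : Type*} [NonUnitalCommSemiring R] (a : R) : IsSumSq (a * a) := by
  simpa using IsSumSq.sq_add a 0 IsSumSq.zero

lemma IsSumSq.mul_self_mul' {R : Type*} [CommRing R] {s : R} (h : IsSumSq s) (a : R) :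
    IsSumSq (a * a * s) := by
  induction h with
  | zero => simpa using IsSumSq.zero
  | @sq_add b t ht iht =>
      have : a * a * (b * b + t) = (a * b) * (a * b) + a * a * t := by ring
      rw [this]
      exact IsSumSq.sq_add _ iht

lemma nonneg_eval_isSumSq (p : Polynomial ℝ) (hp : ∀ x : ℝ, 0 ≤ p.eval x) : IsSumSq p := by
  suffices H : ∀ n : ℕ, ∀ p : Polynomial ℝ, p.natDegree ≤ n → (∀ x : ℝ, 0 ≤ p.eval x) → IsSumSq p
    from H p.natDegree p le_rfl hp
  intro n
  induction n using Nat.strong_induction_on with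
  | _ n ih =>
    intro p hdeg hp
    by_cases h0 : p.natDegree = 0
    · obtain ⟨c, rfl⟩ := natDegree_eq_zero.mp h0
      have hc : 0 ≤ c := by simpa using hp 0
      have : C c = C (Real.sqrt c) * C (Real.sqrt c) := by
        rw [← C_mul, Real.mul_self_sqrt hc]
      rw [this]
      exact isSumSq_mul_self' _
    · obtain ⟨x₀, hx₀⟩ := p.exists_forall_norm_le
      simp only [Real.norm_eq_abs, abs_of_nonneg (hp _)] at hx₀
      set m : ℝ := p.eval x₀ with hm
      have hm0 : 0 ≤ m := hp x₀
      set h : Polynomial ℝ := p - C m with hh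
      have hhe : ∀ x : ℝ, h.eval x = p.eval x - m := by intro x; simp [hh]
      have hhnn : ∀ x : ℝ, 0 ≤ h.eval x := by
        intro x; rw [hhe]; exact sub_nonneg.mpr (hx₀ x)
      have hroot : h.eval x₀ = 0 := by rw [hhe]; exact sub_self _
      have hlm : IsLocalMin (fun x : ℝ => h.eval x) x₀ := by
        apply IsMinOn.isLocalMin _ (Filter.univ_mem)
        intro y _
        show h.eval x₀ ≤ h.eval y
        rw [hroot]; exact hhnn y
      have hderiv : (derivative h).eval x₀ = 0 := by
        have := hlm.deriv_eq_zero
        rwa [Polynomial.deriv] at this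
      obtain ⟨g, hg⟩ := (dvd_iff_isRoot.mpr hroot)
      have hgx : g.eval x₀ = 0 := by
        have hd : derivative h = g + (X - C x₀) * derivative g := by
          rw [hg, derivative_mul]
          simp [mul_comm]
        have := hderiv
        rw [hd] at this
        simpa using this
      obtain ⟨q, hq⟩ := (dvd_iff_isRoot.mpr hgx)
      have hfact : h = (X - C x₀) ^ 2 * q := by rw [hg, hq]; ring
      have hqnn : ∀ x : ℝ, 0 ≤ q.eval x := by
        have hne : ∀ x : ℝ, x ≠ x₀ → 0 ≤ q.eval x := by
          intro x hx
          have h1 : 0 ≤ (x - x₀) ^ 2 * q.eval x := by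
            have := hhnn x
            rw [hfact] at this
            simpa using this
          have hxne : x - x₀ ≠ 0 := sub_ne_zero.mpr hx
          have h2 : 0 < (x - x₀) ^ 2 := by positivity
          nlinarith
        intro x
        rcases eq_or_ne x x₀ with rfl | hx
        · have ht : Filter.Tendsto (fun y : ℝ => q.eval y) (nhdsWithin x {x}ᶜ) (nhds (q.eval x)) :=
            (q.continuous_aeval.tendsto x).mono_left nhdsWithin_le_nhds
          refine ge_of_tendsto ht ?_
          filter_upwards [self_mem_nhdsWithin] with y hy
          exact hne y hy
        · exact hne x hx
      have hhne : h ≠ 0 := by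
        intro e
        have : h.natDegree = p.natDegree := natDegree_sub_C
        rw [e, natDegree_zero] at this
        exact h0 this.symm
      have hqne : q ≠ 0 := by rintro rfl; simp at hfact; exact hhne hfact
      have hdq : q.natDegree + 2 = p.natDegree := by
        have h1 : h.natDegree = p.natDegree := natDegree_sub_C
        have h2 : h.natDegree = 2 + q.natDegree := by
          rw [hfact, natDegree_mul (pow_ne_zero _ (X_sub_C_ne_zero x₀)) hqne]
          simp [natDegree_pow]
        omega
      have hqsum : IsSumSq q := by
        refine ih q.natDegree ?_ q le_rfl hqnn
        omega
      have : p = (X - C x₀) * (X - C x₀) * q + C (Real.sqrt m) * C (Real.sqrt m) := by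
        rw [← C_mul, Real.mul_self_sqrt hm0]
        have : (X - C x₀) * (X - C x₀) = (X - C x₀) ^ 2 := by ring
        rw [this, ← hfact, hh]
        ring
      rw [this]
      exact (hqsum.mul_self_mul' _).add (isSumSq_mul_self' _)

end SOS

section Lfun

noncomputable def Lfun (α : ℕ → ℝ) : Polynomial ℝ →ₗ[ℝ] ℝ :=
  Polynomial.lsum (fun n => ((n.factorial : ℝ) * α n) • LinearMap.id)

lemma Lfun_monomial (α : ℕ → ℝ) (c : ℝ) (n : ℕ) :
    Lfun α (monomial n c) = (n.factorial : ℝ) * c * α n := by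
  rcases eq_or_ne c 0 with rfl | hc
  · simp [Lfun]
  · simp only [Lfun, Polynomial.lsum_apply, Polynomial.sum_def,
      support_monomial n hc, Finset.sum_singleton, coeff_monomial]
    simp; ring

lemma Lfun_eq_range (α : ℕ → ℝ) (p : Polynomial ℝ) :
    Lfun α p = ∑ i ∈ Finset.range (p.natDegree + 1), (i.factorial : ℝ) * p.coeff i * α i := by
  have hrw : p = ∑ i ∈ Finset.range (p.natDegree + 1), monomial i (p.coeff i) :=
    (p.as_sum_range' _ (Nat.lt_succ_self _))
  conv_lhs => rw [hrw]
  rw [map_sum]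
  exact Finset.sum_congr rfl fun i _ => Lfun_monomial α _ i

lemma Lfun_mul (α : ℕ → ℝ) (a b : Polynomial ℝ) :
    Lfun α (a * b) = ∑ i ∈ Finset.range (a.natDegree + 1), ∑ j ∈ Finset.range (b.natDegree + 1),
      a.coeff i * b.coeff j * (((i + j).factorial : ℝ) * α (i + j)) := by
  have ha : a = ∑ i ∈ Finset.range (a.natDegree + 1), monomial i (a.coeff i) :=
    (a.as_sum_range' _ (Nat.lt_succ_self _))
  have hb : b = ∑ j ∈ Finset.range (b.natDegree + 1), monomial j (b.coeff j) :=
    (b.as_sum_range' _ (Nat.lt_succ_self _))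
  conv_lhs => rw [ha, hb]
  rw [Finset.sum_mul_sum, map_sum]
  refine Finset.sum_congr rfl fun i _ => ?_
  rw [map_sum]
  refine Finset.sum_congr rfl fun j _ => ?_
  rw [monomial_mul_monomial, Lfun_monomial]
  ring

end Lfun

section UalphaLemmas

lemma Ualpha_eval_zero (α : ℕ → ℝ) (p : Polynomial ℝ) :
    (Ualpha α p).eval 0 = ∑ i ∈ Finset.range (p.natDegree + 1),
      (i.factorial : ℝ) * p.coeff i * α i := by
  unfold Ualpha
  rw [eval_finset_sum]
  refine Finset.sum_congr rfl fun i _ => ?_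
  rw [eval_smul]
  have : (Polynomial.derivative^[i] p).eval 0 = (Polynomial.derivative^[i] p).coeff 0 :=
    (coeff_zero_eq_eval_zero _).symm
  rw [smul_eq_mul, this, coeff_iterate_derivative]
  simp [Nat.descFactorial_self]
  ring

lemma iterate_derivative_comp' (p : Polynomial ℝ) (x : ℝ) (i : ℕ) :
    Polynomial.derivative^[i] (p.comp (X + C x)) =
      (Polynomial.derivative^[i] p).comp (X + C x) := by
  induction i with
  | zero => simp
  | succ i ih =>
      rw [Function.iterate_succ_apply', Function.iterate_succ_apply', ih, derivative_comp]
      simp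

lemma Ualpha_comp (α : ℕ → ℝ) (p : Polynomial ℝ) (x : ℝ) :
    Ualpha α (p.comp (X + C x)) = (Ualpha α p).comp (X + C x) := by
  unfold Ualpha
  have hdeg : (p.comp (X + C x)).natDegree = p.natDegree := by
    rw [natDegree_comp, natDegree_X_add_C, mul_one]
  rw [hdeg]
  conv_rhs => rw [Polynomial.comp, eval₂_finset_sum]
  refine Finset.sum_congr rfl fun i _ => ?_
  rw [iterate_derivative_comp']
  show α i • (Polynomial.derivative^[i] p).comp (X + C x) = eval₂ C (X + C x) _
  rw [← Polynomial.smul_comp, Polynomial.comp]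

end UalphaLemmas

section Hankel

lemma dotProduct_hankel (α : ℕ → ℝ) (l : ℕ) (v : Fin (l + 1) → ℝ) :
    dotProduct (star v) ((Matrix.of fun i j : Fin (l + 1) =>
        (((i : ℕ) + (j : ℕ)).factorial : ℝ) * α ((i : ℕ) + (j : ℕ))).mulVec v) =
      ∑ i : Fin (l + 1), ∑ j : Fin (l + 1),
        v i * v j * ((((i : ℕ) + (j : ℕ)).factorial : ℝ) * α ((i : ℕ) + (j : ℕ))) := by
  simp only [dotProduct, Matrix.mulVec, dotProduct, Matrix.of_apply, Pi.star_apply,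
    star_trivial, Finset.mul_sum]
  refine Finset.sum_congr rfl fun i _ => Finset.sum_congr rfl fun j _ => by ring

lemma Lfun_sq_nonneg (α : ℕ → ℝ)
    (hc : ∀ l : ℕ, (Matrix.of fun i j : Fin (l + 1) =>
        (((i : ℕ) + (j : ℕ)).factorial : ℝ) * α ((i : ℕ) + (j : ℕ))).PosSemidef)
    (a : Polynomial ℝ) : 0 ≤ Lfun α (a * a) := by
  set l := a.natDegree with hl
  have h0 := (hc l).dotProduct_mulVec_nonneg (fun i : Fin (l + 1) => a.coeff i)
  rw [dotProduct_hankel] at h0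
  rw [Lfun_mul, ← hl, Finset.sum_range fun i =>
    ∑ j ∈ Finset.range (l + 1), a.coeff i * a.coeff j * (((i + j).factorial : ℝ) * α (i + j))]
  calc (0:ℝ) ≤ _ := h0
    _ = _ := by
      refine Finset.sum_congr rfl fun i _ => ?_
      rw [Finset.sum_range fun j => a.coeff (i:ℕ) * a.coeff j *
        ((((i:ℕ) + j).factorial : ℝ) * α ((i:ℕ) + j))]

lemma Lfun_isSumSq_nonneg (α : ℕ → ℝ)
    (hc : ∀ l : ℕ, (Matrix.of fun i j : Fin (l + 1) =>
        (((i : ℕ) + (j : ℕ)).factorial : ℝ) * α ((i : ℕ) + (j : ℕ))).PosSemidef)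
    {s : Polynomial ℝ} (hs : IsSumSq s) : 0 ≤ Lfun α s := by
  induction hs with
  | zero => simp
  | @sq_add a t ht iht =>
      rw [map_add]
      exact add_nonneg (Lfun_sq_nonneg α hc a) iht

end Hankel

theorem stmt_4 (α : ℕ → ℝ) :
    ((∀ p : Polynomial ℝ, (∀ x : ℝ, 0 ≤ p.eval x) → ∀ x : ℝ, 0 ≤ (Ualpha α p).eval x) ↔
      (∀ p : Polynomial ℝ, (∀ x : ℝ, 0 ≤ p.eval x) →
        0 ≤ ∑ i ∈ Finset.range (p.natDegree + 1), (i.factorial : ℝ) * p.coeff i * α i)) ∧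
    ((∀ p : Polynomial ℝ, (∀ x : ℝ, 0 ≤ p.eval x) →
        0 ≤ ∑ i ∈ Finset.range (p.natDegree + 1), (i.factorial : ℝ) * p.coeff i * α i) ↔
      (∀ l : ℕ, (Matrix.of fun i j : Fin (l + 1) =>
        (((i : ℕ) + (j : ℕ)).factorial : ℝ) * α ((i : ℕ) + (j : ℕ))).PosSemidef)) := by
  constructor
  · constructor
    · intro ha p hp
      rw [← Ualpha_eval_zero]
      exact ha p hp 0
    · intro hb p hp x
      have hq : ∀ y : ℝ, 0 ≤ (p.comp (X + C x)).eval y := by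
        intro y
        rw [eval_comp]
        simpa using hp (y + x)
      have h1 := hb _ hq
      rw [← Ualpha_eval_zero, Ualpha_comp, eval_comp] at h1
      simpa using h1
  · constructor
    · intro hb l
      refine Matrix.PosSemidef.of_dotProduct_mulVec_nonneg ?_ ?_
      · show _ = _
        ext i j
        simp only [Matrix.conjTranspose_apply, Matrix.of_apply, star_trivial]
        rw [Nat.add_comm]
      · intro v
        rw [dotProduct_hankel]
        set q : Polynomial ℝ := ∑ i : Fin (l + 1), monomial (i : ℕ) (v i) with hqdef
        have hq : ∀ x : ℝ, 0 ≤ (q * q).eval x := by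
          intro x
          rw [eval_mul]
          exact mul_self_nonneg _
        have h1 := hb (q * q) hq
        rw [← Lfun_eq_range] at h1
        have h2 : Lfun α (q * q) = ∑ i : Fin (l + 1), ∑ j : Fin (l + 1),
            v i * v j * ((((i : ℕ) + (j : ℕ)).factorial : ℝ) * α ((i : ℕ) + (j : ℕ))) := by
          rw [hqdef, Finset.sum_mul_sum, map_sum]
          refine Finset.sum_congr rfl fun i _ => ?_
          rw [map_sum]
          refine Finset.sum_congr rfl fun j _ => ?_
          rw [monomial_mul_monomial, Lfun_monomial]
          ring
        rw [← h2]
        exact h1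
    · intro hc p hp
      rw [← Lfun_eq_range]
      exact Lfun_isSumSq_nonneg α hc (nonneg_eval_isSumSq p hp)
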